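/- Let V be a countable set with rates r, and μ a probability with ⟨μ,r⟩ < ∞. Define V_μ, E_μ to be the vertices/edges where μ(y)r(y,z) > 0, and let ∼ be the relation on V_μ: y ∼ z iff there exist oriented paths in (V_μ,E_μ) from y to z and from z to y. Then ∼ restricted to vertices mutually connected is an equivalence relation, and for any summable divergence-free flow Q with ∑ Φ(Q(y,z), μ(y)r(y,z)) < ∞ and any edge (y,z) with Q(y,z) > 0, it holds that y ∼ z (in particular (y,z) ∈ E_μ and y, z lie in the same equivalence class). -/

import Mathlib

open scoped ENNReal

/-- The extended rate function `Φ`: `Φ(q,p) = q log(q/p) - (q-p)` for `q,p > 0`,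
`Φ(0,p) = p`, `Φ(q,0) = ∞` for `q > 0`. -/
noncomputable def PhiE (q p : ℝ) : ℝ≥0∞ :=
  if q = 0 then ENNReal.ofReal p
  else if p = 0 then ⊤
  else ENNReal.ofReal (q * Real.log (q / p) - (q - p))

theorem stmt_19 (V : Type*) [Countable V]
    (r : V → V → ℝ) (hr0 : ∀ x y, 0 ≤ r x y) (hrd : ∀ x, r x x = 0)
    (μ : V → ℝ) (hμ0 : ∀ x, 0 ≤ μ x) (hμ1 : ∑' x, μ x = 1)
    (hμr : Summable fun p : V × V => μ p.1 * r p.1 p.2)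
    -- `Eμ` is the edge relation of the graph `(V_μ, E_μ)`, and `R y z` states that
    -- there is an oriented path from `y` to `z` in `(V_μ, E_μ)`.
    (Eμ : V → V → Prop) (hEμ : ∀ y z, Eμ y z ↔ 0 < μ y * r y z)
    (R : V → V → Prop) (hR : ∀ y z, R y z ↔ Relation.ReflTransGen Eμ y z) :
    Equivalence (fun y z => R y z ∧ R z y) ∧
    (∀ Q : V → V → ℝ, (∀ y z, 0 ≤ Q y z) →
      (∀ y z, ¬ (y ≠ z ∧ 0 < r y z) → Q y z = 0) →
      (Summable fun p : V × V => Q p.1 p.2) →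
      (∀ y : V, (∑' z, Q y z) = ∑' z, Q z y) →
      (∑' p : V × V, PhiE (Q p.1 p.2) (μ p.1 * r p.1 p.2)) ≠ ⊤ →
      ∀ y z : V, 0 < Q y z → (Eμ y z ∧ R y z ∧ R z y)) := by
  constructor
  · refine ⟨fun x => ?_, fun h => ⟨h.2, h.1⟩, fun h1 h2 => ⟨?_, ?_⟩⟩
    · exact ⟨(hR _ _).2 Relation.ReflTransGen.refl, (hR _ _).2 Relation.ReflTransGen.refl⟩
    · exact (hR _ _).2 (((hR _ _).1 h1.1).trans ((hR _ _).1 h2.1))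
    · exact (hR _ _).2 (((hR _ _).1 h2.2).trans ((hR _ _).1 h1.2))
  · intro Q hQ0 hQsupp hQsum hQdiv hΦ y z hQyz
    -- Step 1: every edge of supp(Q) is in Eμ.
    have hedge : ∀ a b : V, 0 < Q a b → Eμ a b := by
      intro a b hab
      rw [hEμ]
      rcases lt_or_eq_of_le (mul_nonneg (hμ0 a) (hr0 a b)) with h | h
      · exact h
      · exfalso
        apply hΦ
        have hterm : PhiE (Q a b) (μ a * r a b) = ⊤ := by
          simp [PhiE, hab.ne', ← h]
        refine top_le_iff.1 ?_
        rw [← hterm]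
        exact le_trans le_rfl (ENNReal.le_tsum (a, b))
    -- the real work: reachability from z back to y in supp(Q)
    have hQ' : ∀ a b : V, 0 < Q a b → Relation.ReflTransGen Eμ a b := fun a b h =>
      Relation.ReflTransGen.single (hedge a b h)
    -- Define reachable set from z in supp(Q)
    set S : V → V → Prop := fun a b => 0 < Q a b with hS
    set A : Set V := {w | Relation.ReflTransGen S z w} with hA
    have hzA : z ∈ A := Relation.ReflTransGen.refl
    -- work in ℝ≥0∞
    set Q' : V → V → ℝ≥0∞ := fun a b => ENNReal.ofReal (Q a b) with hQ'def
    have hrow : ∀ a : V, Summable fun b => Q a b := fun a => hQsum.prod_factor a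
    have hQsumswap : Summable fun p : V × V => Q p.2 p.1 :=
      ((Equiv.prodComm V V).summable_iff).2 hQsum
    have hcol : ∀ b : V, Summable fun a => Q a b := fun b => hQsumswap.prod_factor b
    have hdiv' : ∀ w : V, (∑' u, Q' u w) = ∑' u, Q' w u := by
      intro w
      rw [← ENNReal.ofReal_tsum_of_nonneg (fun u => hQ0 u w) (hcol w),
        ← ENNReal.ofReal_tsum_of_nonneg (fun u => hQ0 w u) (hrow w), ← hQdiv w]
    -- totals are finite
    have htotswap : (∑' p : V × V, Q' p.2 p.1) ≠ ⊤ := by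
      rw [← ENNReal.ofReal_tsum_of_nonneg (fun p : V × V => hQ0 p.2 p.1) hQsumswap]
      exact ENNReal.ofReal_ne_top
    -- key quantities
    have hsplit : ∀ w : V,
        (∑' u : A, Q' u w) + (∑' u : ↥Aᶜ, Q' u w) = ∑' u, Q' u w := fun w =>
      Summable.tsum_add_tsum_compl (s := A) (f := fun u => Q' u w) ENNReal.summable ENNReal.summable
    have hsplit' : ∀ w : V,
        (∑' u : A, Q' w u) + (∑' u : ↥Aᶜ, Q' w u) = ∑' u, Q' w u := fun w =>
      Summable.tsum_add_tsum_compl (s := A) (f := fun u => Q' w u) ENNReal.summable ENNReal.summable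
    -- outflow from A to Aᶜ is 0
    have hout : ∀ w : V, w ∈ A → (∑' u : ↥Aᶜ, Q' w u) = 0 := by
      intro w hw
      rw [ENNReal.tsum_eq_zero]
      rintro ⟨u, hu⟩
      by_contra h
      have : 0 < Q w u := by
        rcases lt_or_eq_of_le (hQ0 w u) with h' | h'
        · exact h'
        · exact absurd (by simp [hQ'def, ← h']) h
      exact hu (hw.tail this)
    -- X = flow within A, finite
    set X : ℝ≥0∞ := ∑' w : A, ∑' u : A, Q' ↑u ↑w with hX
    set B : ℝ≥0∞ := ∑' w : A, ∑' u : ↥Aᶜ, Q' ↑u ↑w with hB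
    have hin : X + B = ∑' w : A, ∑' u, Q' u ↑w := by
      rw [hX, hB, ← ENNReal.tsum_add]
      exact tsum_congr fun w => hsplit w
    have hXout : (∑' w : A, ∑' u, Q' (↑w) u) = X := by
      have : (∑' w : A, ∑' u, Q' (↑w) u) =
          ∑' w : A, ((∑' u : A, Q' ↑w ↑u) + 0) := by
        refine tsum_congr fun w => ?_
        rw [← hout w w.2, hsplit' w]
      rw [this]
      simp only [add_zero]
      rw [hX, ENNReal.tsum_comm]
    have hdiveq : X + B = X := by
      rw [hin, ← hXout]
      exact tsum_congr fun w => hdiv' w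
    have hXfin : X ≠ ⊤ := by
      intro h
      apply htotswap
      have h2 : (∑' p : V × V, Q' p.2 p.1) = ∑' w, ∑' u, Q' u w :=
        ENNReal.tsum_prod' (f := fun p : V × V => Q' p.2 p.1)
      have h1 : X ≤ ∑' p : V × V, Q' p.2 p.1 := by
        rw [h2]
        calc X ≤ ∑' w : A, ∑' u, Q' ↑u ↑w := by
                refine ENNReal.tsum_le_tsum fun w => ?_
                exact ENNReal.tsum_comp_le_tsum_of_injective Subtype.val_injective _
          _ ≤ ∑' w, ∑' u, Q' u w :=
                ENNReal.tsum_comp_le_tsum_of_injective Subtype.val_injective _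
      rw [h] at h1
      exact top_le_iff.1 h1
    have hB0 : B = 0 := by
      have := hdiveq
      nth_rewrite 2 [← add_zero X] at this
      exact (ENNReal.add_right_inj hXfin).1 this
    -- y must be in A
    have hyA : y ∈ A := by
      by_contra hy
      have hle : Q' y z ≤ B := by
        calc Q' y z ≤ ∑' u : ↥Aᶜ, Q' ↑u z := ENNReal.le_tsum (⟨y, hy⟩ : ↥Aᶜ)
          _ ≤ B := ENNReal.le_tsum (⟨z, hzA⟩ : A)
      rw [hB0, nonpos_iff_eq_zero, hQ'def] at hle
      simp only [ENNReal.ofReal_eq_zero] at hle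
      exact absurd hle (not_le.2 hQyz)
    -- conclude
    refine ⟨hedge y z hQyz, (hR y z).2 (hQ' y z hQyz), (hR z y).2 ?_⟩
    exact Relation.ReflTransGen.mono (fun a b h => hedge a b h) _ _ hyA
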